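/- Let L/K be a finite Galois extension with Galois group G and A a K-subalgebra of End_K(L) containing L. Then the centralizer of A in End_K(L) equals the fixed field L^{A∩G}, where A∩G is the set of automorphisms of L lying in A. -/

import Mathlib

open Module

set_option linter.unusedSectionVars false

namespace Stmt14Aux

variable (K L : Type) [Field K] [Field L] [Algebra K L] [FiniteDimensional K L] [IsGalois K L]

/-- The Galois group as an `L`-basis of `End_K(L)`. -/
noncomputable def gb : Basis (L ≃ₐ[K] L) L (L →ₗ[K] L) :=
  basisOfLinearIndependentOfCardEqFinrank
    ((linearIndependent_toLinearMap K L L).comp _ AlgEquiv.coe_algHom_injective)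
    (by rw [← Nat.card_eq_fintype_card, IsGalois.card_aut_eq_finrank, Module.finrank_linearMap_self])

@[simp] lemma gb_apply (g : L ≃ₐ[K] L) : gb K L g = g.toLinearMap := by
  have : ⇑(gb K L) = (AlgHom.toLinearMap ∘ fun g : L ≃ₐ[K] L => (g : L →ₐ[K] L)) :=
    coe_basisOfLinearIndependentOfCardEqFinrank _ _
  rw [show gb K L g = (⇑(gb K L)) g from rfl, this]
  rfl

variable {K L}

lemma gb_mul_lmul (g : L ≃ₐ[K] L) (y : L) :
    gb K L g * Algebra.lmul K L y = g y • gb K L g := by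
  ext x
  simp [mul_comm]

lemma smul_eq_lmul_mul (c : L) (e : L →ₗ[K] L) : c • e = Algebra.lmul K L c * e := by
  ext x; simp

lemma lmul_mul_gb (l : L) (g : L ≃ₐ[K] L) :
    Algebra.lmul K L l * (gb K L g : Module.End K L) = l • gb K L g := by
  ext x; simp

lemma lmul_mul_smul (l c : L) (e : L →ₗ[K] L) :
    Algebra.lmul K L l * (c • e) = c • (Algebra.lmul K L l * e) := by
  ext x
  simp [mul_left_comm]

variable {A : Subalgebra K (Module.End K L)} (hLA : (Algebra.lmul K L).range ≤ A)

include hLA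

lemma smul_mem_A (c : L) {a : Module.End K L} (ha : a ∈ A) : c • a ∈ A := by
  rw [smul_eq_lmul_mul]
  exact mul_mem (hLA ⟨c, rfl⟩) ha

lemma support_mem_A :
    ∀ (n : ℕ) (a : Module.End K L), a ∈ A → ((gb K L).repr a).support.card = n →
      ∀ g1 ∈ ((gb K L).repr a).support, g1.toLinearMap ∈ A := by
  classical
  intro n
  induction n using Nat.strong_induction_on with
  | _ n IH =>
    intro a ha hcard g1 hg1
    set c := (gb K L).repr a with hc
    by_cases hall : ∀ g0 ∈ c.support, g0 = g1
    · -- a is a multiple of g1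
      have hsum : a = ∑ g : L ≃ₐ[K] L, c g • gb K L g := ((gb K L).sum_repr a).symm
      have hone : a = c g1 • gb K L g1 := by
        rw [hsum]
        refine Fintype.sum_eq_single g1 fun g hg => ?_
        have : c g = 0 := by
          by_contra h
          exact hg (hall g (Finsupp.mem_support_iff.2 h))
        simp [this]
      have hc1 : c g1 ≠ 0 := Finsupp.mem_support_iff.1 hg1
      have : g1.toLinearMap = (c g1)⁻¹ • a := by
        rw [hone, smul_smul, inv_mul_cancel₀ hc1, one_smul, gb_apply]
      rw [this]
      exact smul_mem_A hLA _ ha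
    · push_neg at hall
      obtain ⟨g0, hg0, hg01⟩ := hall
      obtain ⟨y, hy⟩ : ∃ y, g0 y ≠ g1 y := by
        by_contra h
        push_neg at h
        exact hg01 (AlgEquiv.ext h)
      set a' : Module.End K L := a * Algebra.lmul K L y - g0 y • a with ha'def
      have ha' : a' ∈ A := sub_mem (mul_mem ha (hLA ⟨y, rfl⟩)) (smul_mem_A hLA _ ha)
      have hsum : a = ∑ g : L ≃ₐ[K] L, c g • gb K L g := ((gb K L).sum_repr a).symm
      have ha'sum : a' = ∑ g : L ≃ₐ[K] L, (c g * (g y - g0 y)) • gb K L g := by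
        rw [ha'def]
        conv_lhs => rw [hsum]
        rw [Finset.sum_mul, Finset.smul_sum, ← Finset.sum_sub_distrib]
        refine Finset.sum_congr rfl fun g _ => ?_
        rw [smul_mul_assoc, gb_mul_lmul, smul_smul, smul_smul]
        rw [← sub_smul]
        ring_nf
      have hrepr : ⇑((gb K L).repr a') = fun g => c g * (g y - g0 y) := by
        rw [ha'sum]
        exact (gb K L).repr_sum_self _
      have hsub : ((gb K L).repr a').support ⊆ c.support.erase g0 := by
        intro g hg
        have hgne : ((gb K L).repr a') g ≠ 0 := Finsupp.mem_support_iff.1 hg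
        rw [hrepr] at hgne
        simp only at hgne
        refine Finset.mem_erase.2 ⟨?_, Finsupp.mem_support_iff.2 fun h => hgne (by rw [h, zero_mul])⟩
        rintro rfl
        exact hgne (by rw [sub_self, mul_zero])
      have hcard' : ((gb K L).repr a').support.card < n := by
        calc ((gb K L).repr a').support.card ≤ (c.support.erase g0).card :=
              Finset.card_le_card hsub
          _ < c.support.card := Finset.card_erase_lt_of_mem hg0
          _ = n := hcard
      have hg1' : g1 ∈ ((gb K L).repr a').support := by
        refine Finsupp.mem_support_iff.2 ?_
        rw [hrepr]
        exact mul_ne_zero (Finsupp.mem_support_iff.1 hg1) (sub_ne_zero.2 fun h => hy h.symm)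
      exact IH _ hcard' a' ha' rfl g1 hg1'

end Stmt14Aux

open Stmt14Aux

/-- Let `L/K` be a finite Galois extension with Galois group `G` and `A` a `K`-subalgebra of
`End_K(L)` containing (the image of) `L`.  Then the centralizer of `A` in `End_K(L)` equals
(the image of) the fixed field `L^{A∩G}`, where `A∩G` is the set of automorphisms of `L`
lying in `A`. -/
theorem stmt14 (K L : Type) [Field K] [Field L] [Algebra K L] [FiniteDimensional K L]
    [IsGalois K L] (A : Subalgebra K (Module.End K L))
    (hLA : (Algebra.lmul K L).range ≤ A) :
    ((Subalgebra.centralizer K (A : Set (Module.End K L)) :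
        Subalgebra K (Module.End K L)) : Set (Module.End K L)) =
      (Algebra.lmul K L) ''
        {l : L | ∀ g : L ≃ₐ[K] L, (g.toLinearMap : Module.End K L) ∈ A → g l = l} := by
  ext f
  simp only [SetLike.mem_coe, Subalgebra.mem_centralizer_iff, Set.mem_image, Set.mem_setOf_eq]
  constructor
  · intro hf
    refine ⟨f 1, fun g hg => ?_, ?_⟩
    · have h := hf g.toLinearMap hg
      have h1 := congrArg (fun e : Module.End K L => e 1) h
      simpa [Module.End.mul_apply] using h1
    · ext x
      have h := hf (Algebra.lmul K L x) (hLA ⟨x, rfl⟩)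
      have h1 := congrArg (fun e : Module.End K L => e 1) h
      simp only [Module.End.mul_apply] at h1
      simpa [mul_comm] using h1
  · rintro ⟨l, hl, rfl⟩
    intro a haA
    have hsum : a = ∑ g, (gb K L).repr a g • gb K L g := ((gb K L).sum_repr a).symm
    rw [hsum, Finset.sum_mul, Finset.mul_sum]
    refine Finset.sum_congr rfl fun g _ => ?_
    by_cases h : (gb K L).repr a g = 0
    · simp [h]
    · have hgA : g.toLinearMap ∈ A :=
        support_mem_A hLA _ a haA rfl g (Finsupp.mem_support_iff.2 h)
      have hgl : g l = l := hl g hgA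
      ext x
      simp [mul_comm, mul_left_comm, mul_assoc, hgl]
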